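/- Let A and B be disjoint nonempty finite vertex sets, let H be the complete bipartite graph with parts A and B, and let G be a perfect matching on A ∪ B. If the graph H ∪ G contains a Hamilton cycle, then the number of edges of G with both endpoints in B is at least |B| − |A|. -/
import Mathlib

open SimpleGraph

private lemma countP_or_le' {α} (l : List α) (p q : α → Bool) :
    l.countP (fun x => p x || q x) ≤ l.countP p + l.countP q := by
  induction l with
  | nil => simp
  | cons a l ih =>
    by_cases hp : p a <;> by_cases hq : q a <;>
      simp [List.countP_cons, hp, hq] <;> omega

theorem stmt14 {V : Type*} [Fintype V] [DecidableEq V] (A B : Set V)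
    (hA : A.Nonempty) (hB : B.Nonempty)
    (hdisj : Disjoint A B) (hunion : A ∪ B = Set.univ)
    (H G : SimpleGraph V)
    (hH : ∀ u v : V, H.Adj u v ↔ ((u ∈ A ∧ v ∈ B) ∨ (u ∈ B ∧ v ∈ A)))
    (hG : ∀ v : V, (G.neighborSet v).ncard = 1)
    (ham : ∃ (v : V) (w : (H ⊔ G).Walk v v), w.IsHamiltonianCycle) :
    (B.ncard : ℤ) - (A.ncard : ℤ) ≤
      ({e ∈ G.edgeSet | ∀ v ∈ e, v ∈ B}.ncard : ℤ) := by
  classical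
  obtain ⟨v, w, hw⟩ := ham
  have hcnt : ∀ a : V, w.support.tail.count a = 1 :=
    (Walk.isHamiltonianCycle_iff_isCycle_and_support_count_tail_eq_one.mp hw).2
  -- count of a in the dropLast of support equals count in tail
  have hdl : ∀ a : V, w.support.dropLast.count a = 1 := by
    intro a
    have h1 : w.darts.map (·.fst) ++ [v] = w.support := w.map_fst_darts_append
    have h2 : w.support = v :: w.support.tail := w.support_eq_cons
    have h3 := congrArg (List.count a) h1
    rw [h2, List.count_append, List.count_cons] at h3
    have h4 : w.darts.map (·.fst) = w.support.dropLast := w.map_fst_darts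
    rw [h4, List.count_cons, hcnt a] at h3
    simp only [List.count_nil] at h3
    split_ifs at h3 <;> omega
  -- each vertex is in at most 2 edges of the cycle
  have hedge_cnt : ∀ a : V, w.edges.countP (fun e => a ∈ e) ≤ 2 := by
    intro a
    have : w.edges.countP (fun e => a ∈ e)
        = w.darts.countP (fun d => a ∈ d.edge) := by
      rw [Walk.edges, List.countP_map]; rfl
    rw [this]
    have hmono : w.darts.countP (fun d => a ∈ d.edge)
        ≤ w.darts.countP (fun d => (d.fst = a : Bool) || (d.snd = a : Bool)) := by
      apply List.countP_mono_left
      intro d _ hd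
      have hde : d.edge = s(d.fst, d.snd) := by rcases d with ⟨⟨x, y⟩, h⟩; rfl
      simp only [decide_eq_true_eq, hde, Sym2.mem_iff] at hd
      simpa using hd.imp Eq.symm Eq.symm
    refine hmono.trans ((countP_or_le' _ _ _).trans ?_)
    have hf : w.darts.countP (fun d => (d.fst = a : Bool))
        = w.support.dropLast.count a := by
      rw [← w.map_fst_darts, List.count_eq_countP, List.countP_map]; rfl
    have hs : w.darts.countP (fun d => (d.snd = a : Bool))
        = w.support.tail.count a := by
      rw [← w.map_snd_darts, List.count_eq_countP, List.countP_map]; rfl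
    rw [hf, hs, hdl a, hcnt a]
  have hnodup : w.edges.Nodup := hw.isCycle.edges_nodup
  set E : Finset (Sym2 V) := w.edges.toFinset with hE
  have hEcard : E.card = Fintype.card V := by
    rw [hE, List.toFinset_card_of_nodup hnodup, w.length_edges, hw.length_eq]
  set EA : Finset (Sym2 V) := E.filter (fun e => ∃ a ∈ e, a ∈ A) with hEAdef
  set EB : Finset (Sym2 V) := E.filter (fun e => ∀ x ∈ e, x ∈ B) with hEBdef
  have hfinA : A.Finite := A.toFinite
  -- |EA| ≤ 2 |A|
  have hEA : EA.card ≤ 2 * A.ncard := by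
    have hsub : EA ⊆ hfinA.toFinset.biUnion (fun a => E.filter (fun e => a ∈ e)) := by
      intro e he
      rw [hEAdef, Finset.mem_filter] at he
      obtain ⟨a, ha, haA⟩ := he.2
      exact Finset.mem_biUnion.mpr ⟨a, hfinA.mem_toFinset.mpr haA,
        Finset.mem_filter.mpr ⟨he.1, ha⟩⟩
    calc EA.card ≤ (hfinA.toFinset.biUnion (fun a => E.filter (fun e => a ∈ e))).card :=
          Finset.card_le_card hsub
      _ ≤ ∑ a ∈ hfinA.toFinset, (E.filter (fun e => a ∈ e)).card := Finset.card_biUnion_le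
      _ ≤ ∑ a ∈ hfinA.toFinset, 2 := by
          refine Finset.sum_le_sum fun a _ => ?_
          have : E.filter (fun e => a ∈ e) = (w.edges.filter (fun e => a ∈ e)).toFinset := by
            ext e; simp [hE]
          rw [this, List.toFinset_card_of_nodup (hnodup.filter _), ← List.countP_eq_length_filter]
          exact hedge_cnt a
      _ = 2 * A.ncard := by
          rw [Finset.sum_const, smul_eq_mul, Set.ncard_eq_toFinset_card _ hfinA, mul_comm]
  -- E ⊆ EA ∪ EB
  have hcover : E ⊆ EA ∪ EB := by
    intro e he
    by_cases h : ∃ a ∈ e, a ∈ A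
    · exact Finset.mem_union_left _ (Finset.mem_filter.mpr ⟨he, h⟩)
    · refine Finset.mem_union_right _ (Finset.mem_filter.mpr ⟨he, fun x hx => ?_⟩)
      push_neg at h
      have hxA := h x hx
      have hx' : x ∈ A ∪ B := hunion ▸ Set.mem_univ x
      exact hx'.resolve_left hxA
  have hEcard2 : E.card ≤ EA.card + EB.card :=
    (Finset.card_le_card hcover).trans (Finset.card_union_le _ _)
  -- |A| + |B| = card V
  have hAB : A.ncard + B.ncard = Fintype.card V := by
    rw [← Set.ncard_union_eq hdisj A.toFinite B.toFinite, hunion, Set.ncard_univ,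
      Nat.card_eq_fintype_card]
  -- EB injects into target
  have hEBsub : (EB : Set (Sym2 V)) ⊆ {e ∈ G.edgeSet | ∀ v ∈ e, v ∈ B} := by
    intro e he
    simp only [Finset.coe_filter, Set.mem_setOf_eq, hEBdef] at he
    obtain ⟨heE, hB'⟩ := he
    have heW : e ∈ w.edges := by rw [hE, List.mem_toFinset] at heE; exact heE
    have heHG : e ∈ (H ⊔ G).edgeSet := w.edges_subset_edgeSet heW
    rw [SimpleGraph.edgeSet_sup, Set.mem_union] at heHG
    refine ⟨?_, hB'⟩
    induction e with
    | h x y =>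
      rcases heHG with h' | h'
      · rw [SimpleGraph.mem_edgeSet, hH] at h'
        exfalso
        have hxB : x ∈ B := hB' x (by simp)
        have hyB : y ∈ B := hB' y (by simp)
        rcases h' with ⟨hxA, _⟩ | ⟨_, hyA⟩
        · exact hdisj.ne_of_mem hxA hxB rfl
        · exact hdisj.ne_of_mem hyA hyB rfl
      · exact h'
  have htgt : EB.card ≤ {e ∈ G.edgeSet | ∀ v ∈ e, v ∈ B}.ncard := by
    rw [← Set.ncard_coe_finset]
    exact Set.ncard_le_ncard hEBsub (Set.toFinite _)
  rw [hEcard, ← hAB] at hEcard2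
  omega
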